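/- arXiv:2007.15415 — 6 statements merged into one kernel-verified Lean document; each statement's English description precedes it below -/
import Mathlib

section
/- Rasiowa–Sikorski Lemma: let B be a Boolean algebra, a ∈ B a nonzero element, and (A_n)_{n∈ℕ} a countable family of subsets of B each of which has a supremum in B. Then there exists an ultrafilter U on B with a ∈ U such that for every n, if sup A_n ∈ U then A_n ∩ U ≠ ∅. -/
/-- An ultrafilter on a Boolean algebra `B`. -/
def IsUltrafilterSet {B : Type*} [BooleanAlgebra B] (F : Set B) : Prop :=
  ⊤ ∈ F ∧ ⊥ ∉ F ∧ (∀ a b : B, a ∈ F → a ≤ b → b ∈ F) ∧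
    (∀ a b : B, a ∈ F → b ∈ F → a ⊓ b ∈ F) ∧ (∀ a : B, a ∈ F ∨ aᶜ ∈ F)

/-- Rasiowa–Sikorski Lemma: given a nonzero `a` in a Boolean algebra `B` and a
countable family of subsets `A n` each having a supremum `s n` in `B`, there is
an ultrafilter `U` containing `a` such that whenever `s n ∈ U`, some element of
`A n` lies in `U`. -/
theorem rasiowa_sikorski (B : Type*) [BooleanAlgebra B] (a : B) (ha : a ≠ ⊥)
    (A : ℕ → Set B) (s : ℕ → B) (hs : ∀ n, IsLUB (A n) (s n)) :
    ∃ U : Set B, IsUltrafilterSet U ∧ a ∈ U ∧ ∀ n, s n ∈ U → (A n ∩ U).Nonempty := by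
  classical
  -- key step: refine a nonzero element to decide the n-th supremum
  have key : ∀ (x : B), x ≠ ⊥ → ∀ n : ℕ, ∃ y : B, y ≠ ⊥ ∧ y ≤ x ∧
      (y ≤ (s n)ᶜ ∨ ∃ b ∈ A n, y ≤ b) := by
    intro x hx n
    by_cases h : x ⊓ (s n)ᶜ = ⊥
    · have hxs : x ≤ s n := by
        rw [← sdiff_eq_bot_iff, sdiff_eq]; exact h
      have hb : ∃ b ∈ A n, x ⊓ b ≠ ⊥ := by
        by_contra hco
        push_neg at hco
        have hub : s n ≤ xᶜ := (hs n).2 fun b hb => by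
          have := hco b hb
          rw [← disjoint_iff, disjoint_comm] at this
          exact le_compl_iff_disjoint_right.mpr this
        have : x ≤ xᶜ := hxs.trans hub
        exact hx (le_bot_iff.mp (by
          calc x ≤ x ⊓ xᶜ := le_inf le_rfl this
            _ = ⊥ := inf_compl_eq_bot))
      obtain ⟨b, hbA, hbne⟩ := hb
      exact ⟨x ⊓ b, hbne, inf_le_left, Or.inr ⟨b, hbA, inf_le_right⟩⟩
    · exact ⟨x ⊓ (s n)ᶜ, h, inf_le_left, Or.inl inf_le_right⟩
  -- build the decreasing sequence
  let step : ℕ → {x : B // x ≠ ⊥} → {x : B // x ≠ ⊥} := fun n x =>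
    ⟨(key x.1 x.2 n).choose, (key x.1 x.2 n).choose_spec.1⟩
  let c : ℕ → {x : B // x ≠ ⊥} := fun n => Nat.rec ⟨a, ha⟩ step n
  have hcsucc : ∀ n, c (n + 1) = step n (c n) := fun n => rfl
  have hstep : ∀ n, (c (n+1)).1 ≤ (c n).1 ∧
      ((c (n+1)).1 ≤ (s n)ᶜ ∨ ∃ b ∈ A n, (c (n+1)).1 ≤ b) := by
    intro n
    have h := (key (c n).1 (c n).2 n).choose_spec
    exact ⟨h.2.1, h.2.2⟩
  have hanti : ∀ m n, m ≤ n → (c n).1 ≤ (c m).1 := by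
    intro m n hmn
    induction n with
    | zero => simp_all
    | succ k ih =>
      rcases Nat.lt_or_ge m (k+1) with h | h
      · exact le_trans (hstep k).1 (ih (Nat.lt_succ_iff.mp h))
      · have : m = k + 1 := le_antisymm hmn h
        subst this; exact le_rfl
  -- the base filter
  set F0 : Set B := {x | ∃ n, (c n).1 ≤ x} with hF0
  set S : Set (Set B) := {U | (⊤ ∈ U ∧ ⊥ ∉ U ∧ (∀ x y : B, x ∈ U → x ≤ y → y ∈ U) ∧
    (∀ x y : B, x ∈ U → y ∈ U → x ⊓ y ∈ U)) ∧ F0 ⊆ U} with hS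
  have hF0S : F0 ∈ S := by
    refine ⟨⟨⟨0, le_top⟩, ?_, ?_, ?_⟩, subset_rfl⟩
    · rintro ⟨n, hn⟩
      exact (c n).2 (le_bot_iff.mp hn)
    · rintro x y ⟨n, hn⟩ hxy; exact ⟨n, hn.trans hxy⟩
    · rintro x y ⟨m, hm⟩ ⟨k, hk⟩
      exact ⟨max m k, le_inf ((hanti m _ (le_max_left m k)).trans hm)
        ((hanti k _ (le_max_right m k)).trans hk)⟩
  have hchain : ∀ ch ⊆ S, IsChain (· ⊆ ·) ch → ch.Nonempty → ∃ ub ∈ S, ∀ t ∈ ch, t ⊆ ub := by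
    intro ch hchS hch hne
    obtain ⟨V, hV⟩ := hne
    refine ⟨⋃₀ ch, ⟨⟨⟨V, hV, (hchS hV).1.1⟩, ?_, ?_, ?_⟩, ?_⟩, fun s hs => Set.subset_sUnion_of_mem hs⟩
    · rintro ⟨W, hW, hbot⟩
      exact (hchS hW).1.2.1 hbot
    · rintro x y ⟨W, hW, hx⟩ hxy
      exact ⟨W, hW, (hchS hW).1.2.2.1 x y hx hxy⟩
    · rintro x y ⟨W, hW, hx⟩ ⟨W', hW', hy⟩
      rcases hch.total hW hW' with h | h
      · exact ⟨W', hW', (hchS hW').1.2.2.2 x y (h hx) hy⟩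
      · exact ⟨W, hW, (hchS hW).1.2.2.2 x y hx (h hy)⟩
    · exact (hchS hV).2.trans (Set.subset_sUnion_of_mem hV)
  obtain ⟨U, hFU, hmax⟩ := zorn_subset_nonempty S hchain F0 hF0S
  obtain ⟨⟨htop, hbot, hup, hinf⟩, hF0U⟩ := hmax.prop
  -- maximality gives ultrafilter property
  have hult : ∀ x : B, x ∈ U ∨ xᶜ ∈ U := by
    intro x
    by_contra hco
    push_neg at hco
    obtain ⟨hx, hxc⟩ := hco
    -- for z with z ∉ U, the filter generated by U and z must be improper
    have himp : ∀ z : B, z ∉ U → ∃ u ∈ U, u ⊓ z = ⊥ := by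
      intro z hz
      by_contra hco2
      push_neg at hco2
      set V : Set B := {y | ∃ u ∈ U, u ⊓ z ≤ y} with hV
      have hVS : V ∈ S := by
        refine ⟨⟨⟨⊤, htop, le_top⟩, ?_, ?_, ?_⟩, fun w hw => ?_⟩
        · rintro ⟨u, hu, hbz⟩
          exact hco2 u hu (le_bot_iff.mp hbz)
        · rintro p q ⟨u, hu, hpu⟩ hpq; exact ⟨u, hu, hpu.trans hpq⟩
        · rintro p q ⟨u, hu, hpu⟩ ⟨v, hv, hqv⟩
          exact ⟨u ⊓ v, hinf u v hu hv, by
            refine le_inf (le_trans ?_ hpu) (le_trans ?_ hqv)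
            · exact inf_le_inf_right z inf_le_left
            · exact inf_le_inf_right z inf_le_right⟩
        · exact ⟨w, hF0U hw, inf_le_left⟩
      have hUV : U ⊆ V := fun u hu => ⟨u, hu, inf_le_left⟩
      have : V = U := hmax.eq_of_ge hVS hUV
      exact hz (this ▸ ⟨⊤, htop, by simp⟩)
    obtain ⟨u, hu, hub⟩ := himp x hx
    obtain ⟨v, hv, hvb⟩ := himp xᶜ hxc
    have huv : u ⊓ v ∈ U := hinf u v hu hv
    have : u ⊓ v = ⊥ := by
      have h1 : (u ⊓ v) ⊓ x = ⊥ := le_bot_iff.mp (le_trans (inf_le_inf_right x inf_le_left) hub.le)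
      have h2 : (u ⊓ v) ⊓ xᶜ = ⊥ :=
        le_bot_iff.mp (le_trans (inf_le_inf_right xᶜ inf_le_right) hvb.le)
      calc u ⊓ v = (u ⊓ v) ⊓ (x ⊔ xᶜ) := by simp
        _ = (u ⊓ v) ⊓ x ⊔ (u ⊓ v) ⊓ xᶜ := inf_sup_left _ _ _
        _ = ⊥ := by rw [h1, h2]; simp
    exact absurd (this ▸ huv) hbot
  refine ⟨U, ⟨htop, hbot, hup, hinf, hult⟩, hF0U ⟨0, le_rfl⟩, ?_⟩
  intro n hsn
  rcases (hstep n).2 with h | ⟨b, hbA, hb⟩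
  · exfalso
    have h1 : (s n)ᶜ ∈ U := hup _ _ (hF0U ⟨n+1, le_rfl⟩) h
    have : s n ⊓ (s n)ᶜ ∈ U := hinf _ _ hsn h1
    rw [inf_compl_eq_bot] at this
    exact hbot this
  · exact ⟨b, hbA, hup _ _ (hF0U ⟨n+1, le_rfl⟩) hb⟩
end

section
/- For a compact Hausdorff zero-dimensional (Boolean) space X, the Vietoris hyperspace V(X) of closed subsets of X, with topology generated by the sets ◇U = {C closed | C ∩ U ≠ ∅} and their complements for U clopen in X, is again a compact Hausdorff zero-dimensional space. -/
open TopologicalSpace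

/-- The Vietoris topology on the hyperspace of closed subsets of a Boolean space `X`,
generated by the sets `◇U = {C | C ∩ U ≠ ∅}` and their complements, for `U` clopen. -/
def vietorisTopology (X : Type*) [TopologicalSpace X] : TopologicalSpace (Closeds X) :=
  TopologicalSpace.generateFrom
    ({s : Set (Closeds X) | ∃ U : Set X, IsClopen U ∧ s = {C : Closeds X | ((C : Set X) ∩ U).Nonempty}} ∪
     {s : Set (Closeds X) | ∃ U : Set X, IsClopen U ∧ s = {C : Closeds X | ((C : Set X) ∩ U).Nonempty}ᶜ})

namespace VietorisAux

open Set Filter Topology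

variable {X : Type*} [TopologicalSpace X]

/-- `◇U`. -/
def dia (U : Set X) : Set (Closeds X) := {C : Closeds X | ((C : Set X) ∩ U).Nonempty}

/-- The generating family. -/
def vGen (X : Type*) [TopologicalSpace X] : Set (Set (Closeds X)) :=
  {s : Set (Closeds X) | ∃ U : Set X, IsClopen U ∧ s = dia U} ∪
    {s : Set (Closeds X) | ∃ U : Set X, IsClopen U ∧ s = (dia U)ᶜ}

theorem vietoris_eq : vietorisTopology X = TopologicalSpace.generateFrom (vGen X) := rfl

theorem isOpen_gen {s : Set (Closeds X)} (hs : s ∈ vGen X) :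
    IsOpen[vietorisTopology X] s :=
  TopologicalSpace.GenerateOpen.basic s hs

theorem isClopen_gen {s : Set (Closeds X)} (hs : s ∈ vGen X) :
    @IsClopen (Closeds X) (vietorisTopology X) s := by
  refine ⟨@IsClosed.mk _ (vietorisTopology X) s ?_, isOpen_gen hs⟩
  rcases hs with ⟨U, hU, rfl⟩ | ⟨U, hU, rfl⟩
  · exact isOpen_gen (Or.inr ⟨U, hU, rfl⟩)
  · rw [compl_compl]; exact isOpen_gen (Or.inl ⟨U, hU, rfl⟩)

theorem isOpen_dia {U : Set X} (hU : IsClopen U) : IsOpen[vietorisTopology X] (dia U) :=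
  isOpen_gen (Or.inl ⟨U, hU, rfl⟩)

theorem isOpen_dia_compl {U : Set X} (hU : IsClopen U) :
    IsOpen[vietorisTopology X] (dia U)ᶜ :=
  isOpen_gen (Or.inr ⟨U, hU, rfl⟩)

/-- Zero-dimensionality: the clopen sets form a basis. -/
theorem clopen_basis :
    @IsTopologicalBasis (Closeds X) (vietorisTopology X) {s | @IsClopen (Closeds X) (vietorisTopology X) s} := by
  letI := vietorisTopology X
  have hsub : IsTopologicalBasis ((fun f : Set (Set (Closeds X)) => ⋂₀ f) '' {f : Set (Set (Closeds X)) | f.Finite ∧ f ⊆ vGen X}) :=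
    isTopologicalBasis_of_subbasis vietoris_eq
  refine isTopologicalBasis_of_isOpen_of_nhds (fun s hs => hs.2) ?_
  intro a u hau hu
  obtain ⟨v, ⟨f, ⟨hf, hfg⟩, rfl⟩, hav, hvu⟩ := hsub.exists_subset_of_mem_open hau hu
  refine ⟨⋂₀ f, ?_, hav, hvu⟩
  rw [Set.sInter_eq_biInter]
  exact hf.isClopen_biInter (fun s hs => isClopen_gen (hfg hs))

theorem t2 (hX : IsTopologicalBasis {s : Set X | IsClopen s}) :
    @T2Space (Closeds X) (vietorisTopology X) := by
  letI := vietorisTopology X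
  have key : ∀ C D : Closeds X, ∀ x : X, x ∈ (C : Set X) → x ∉ (D : Set X) →
      ∃ u v : Set (Closeds X), IsOpen u ∧ IsOpen v ∧ C ∈ u ∧ D ∈ v ∧ Disjoint u v := by
    intro C D x hxC hxD
    obtain ⟨U, hU, hxU, hUD⟩ := hX.exists_subset_of_mem_open (show x ∈ (↑D)ᶜ from hxD)
      D.2.isOpen_compl
    refine ⟨dia U, (dia U)ᶜ, isOpen_dia hU, isOpen_dia_compl hU, ⟨x, hxC, hxU⟩, ?_,
      disjoint_compl_right⟩
    rintro ⟨y, hyD, hyU⟩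
    exact hUD hyU hyD
  refine ⟨fun C D hCD => ?_⟩
  have hne : (C : Set X) ≠ (D : Set X) := fun h => hCD (SetLike.coe_injective h)
  by_cases h : (C : Set X) ⊆ (D : Set X)
  · have h2 : ¬ (D : Set X) ⊆ (C : Set X) := fun h2 => hne (subset_antisymm h h2)
    obtain ⟨x, hxD, hxC⟩ := not_subset.mp h2
    obtain ⟨u, v, hu, hv, hDu, hCv, hdisj⟩ := key D C x hxD hxC
    exact ⟨v, u, hv, hu, hCv, hDu, hdisj.symm⟩
  · obtain ⟨x, hxC, hxD⟩ := not_subset.mp h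
    obtain ⟨u, v, hu, hv, hCu, hDv, hdisj⟩ := key C D x hxC hxD
    exact ⟨u, v, hu, hv, hCu, hDv, hdisj⟩

theorem compact [CompactSpace X] : @CompactSpace (Closeds X) (vietorisTopology X) := by
  letI := vietorisTopology X
  refine ⟨isCompact_iff_ultrafilter_le_nhds.mpr fun F _ => ?_⟩
  classical
  set Cs : Set X := {x | ∀ U : Set X, IsClopen U → x ∈ U → dia U ∈ F} with hCs
  have hclosed : IsClosed Cs := by
    rw [← isOpen_compl_iff, isOpen_iff_mem_nhds]
    intro x hx
    simp only [hCs, mem_compl_iff, mem_setOf_eq, not_forall] at hx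
    obtain ⟨U, hU, hxU, hUF⟩ := hx
    exact Filter.mem_of_superset (hU.2.mem_nhds hxU) fun y hy hyC => hUF (hyC U hU hy)
  refine ⟨⟨Cs, hclosed⟩, mem_univ _, ?_⟩
  have hn : @nhds (Closeds X) (vietorisTopology X) ⟨Cs, hclosed⟩ =
      ⨅ s ∈ {s : Set (Closeds X) | (⟨Cs, hclosed⟩ : Closeds X) ∈ s ∧ s ∈ vGen X}, 𝓟 s :=
    nhds_generateFrom
  rw [hn, le_iInf₂_iff]
  rintro s ⟨hCins, hsgen⟩
  rw [Filter.le_principal_iff]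
  rcases hsgen with ⟨U, hU, rfl⟩ | ⟨U, hU, rfl⟩
  · obtain ⟨x, hxC, hxU⟩ := hCins
    exact hxC U hU hxU
  · refine Ultrafilter.compl_mem_iff_notMem.mpr fun hdia => ?_
    have hxnot : ∀ x ∈ U, ∃ V : Set X, IsClopen V ∧ x ∈ V ∧ dia V ∉ F := by
      intro x hxU
      have hx : x ∉ Cs := fun hxC => hCins ⟨x, hxC, hxU⟩
      simp only [hCs, mem_setOf_eq, not_forall] at hx
      obtain ⟨V, hV, hxV, hVF⟩ := hx
      exact ⟨V, hV, hxV, hVF⟩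
    choose! V hV1 hV2 hV3 using hxnot
    have hUcomp : IsCompact U := hU.1.isCompact
    obtain ⟨t, htU, hcov⟩ :=
      hUcomp.elim_nhds_subcover V fun x hx => (hV1 x hx).2.mem_nhds (hV2 x hx)
    have hsub : dia U ⊆ ⋃ x ∈ t, dia (V x) := by
      rintro C ⟨y, hyC, hyU⟩
      obtain ⟨x, hxt, hyV⟩ := mem_iUnion₂.mp (hcov hyU)
      exact mem_iUnion₂.mpr ⟨x, hxt, ⟨y, hyC, hyV⟩⟩
    have hmem : (⋃ x ∈ t, dia (V x)) ∈ F := Filter.mem_of_superset hdia hsub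
    obtain ⟨x, hxt, hx⟩ := (Ultrafilter.finite_biUnion_mem_iff t.finite_toSet).mp hmem
    exact hV3 x (htU x hxt) hx

end VietorisAux

/-- For a compact Hausdorff zero-dimensional space `X`, the Vietoris hyperspace of
closed subsets of `X` is again compact, Hausdorff and zero-dimensional. -/
theorem vietoris_of_boolean_space_is_boolean_space (X : Type*) [TopologicalSpace X]
    [CompactSpace X] [T2Space X] (hX : IsTopologicalBasis {s : Set X | IsClopen s}) :
    letI : TopologicalSpace (Closeds X) := vietorisTopology X
    CompactSpace (Closeds X) ∧ T2Space (Closeds X) ∧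
      IsTopologicalBasis {s : Set (Closeds X) | IsClopen s} := by
  letI : TopologicalSpace (Closeds X) := vietorisTopology X
  exact ⟨VietorisAux.compact, VietorisAux.t2 hX, VietorisAux.clopen_basis⟩
end

section
/- For a Boolean space X with dual Boolean algebra B (of clopen subsets), the Vietoris hyperspace V(X) is homeomorphic to the space M(X,2) of finitely additive 2-valued measures on B (functions μ : B → 2 with μ(0)=0 and μ(a ∨ b) ∨ μ(a ∧ b) = μ(a) ∨ μ(b) for all a,b), topologized as a subspace of 2^B, via C ↦ μ_C where μ_C(a) = 1 iff the clopen set corresponding to a meets C. -/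
open TopologicalSpace

/-- The space of finitely additive `2`-valued measures on the Boolean algebra of
clopen subsets of `X`, topologized as a subspace of `2^B` with the product topology. -/
def MeasSpace (X : Type*) [TopologicalSpace X] : Type _ :=
  {μ : Clopens X → Bool // μ ⊥ = false ∧
    ∀ a b : Clopens X, (μ (a ⊔ b) || μ (a ⊓ b)) = (μ a || μ b)}

instance (X : Type*) [TopologicalSpace X] : TopologicalSpace (MeasSpace X) :=
  instTopologicalSpaceSubtype

section Aux

open scoped Classical

variable {X : Type*} [TopologicalSpace X]

/-- The measure associated to a closed set. -/
noncomputable def measOf (C : Closeds X) : MeasSpace X :=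
  ⟨fun a => decide ((a : Set X) ∩ (C : Set X)).Nonempty, by
    simp, by
    intro a b
    rw [Bool.eq_iff_iff]
    simp only [Bool.or_eq_true, decide_eq_true_iff, Clopens.coe_sup, Clopens.coe_inf,
      Set.union_inter_distrib_right, Set.union_nonempty]
    constructor
    · rintro ((h | h) | h)
      · exact Or.inl h
      · exact Or.inr h
      · exact Or.inl (h.mono (Set.inter_subset_inter_left _ Set.inter_subset_left))
    · rintro (h | h)
      · exact Or.inl (Or.inl h)
      · exact Or.inl (Or.inr h)⟩

lemma measOf_monotone (μ : MeasSpace X) {a b : Clopens X} (hab : a ≤ b)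
    (ha : μ.1 a = true) : μ.1 b = true := by
  have key := μ.2.2 a (b \ a)
  rw [sup_sdiff_cancel' le_rfl hab, inf_sdiff_self_right, μ.2.1, Bool.or_false, ha,
    Bool.true_or] at key
  exact key

lemma measOf_sup_false (μ : MeasSpace X) {a b : Clopens X}
    (ha : μ.1 a = false) (hb : μ.1 b = false) : μ.1 (a ⊔ b) = false := by
  have key := μ.2.2 a b
  rw [ha, hb, Bool.or_false, Bool.or_eq_false_iff] at key
  exact key.1

/-- The support of a measure. -/
def suppSet (μ : MeasSpace X) : Set X :=
  (⋃ a : {a : Clopens X // μ.1 a = false}, ((a : Clopens X) : Set X))ᶜ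

lemma suppSet_closed (μ : MeasSpace X) : IsClosed (suppSet μ) :=
  (isOpen_iUnion fun a => a.1.2.isOpen).isClosed_compl

lemma mem_suppSet_iff {μ : MeasSpace X} {x : X} :
    x ∈ suppSet μ ↔ ∀ a : Clopens X, μ.1 a = false → x ∉ (a : Set X) := by
  simp only [suppSet, Set.mem_compl_iff, Set.mem_iUnion, Subtype.exists, not_exists]
  try tauto

lemma suppSet_spec [CompactSpace X] (μ : MeasSpace X) (a : Clopens X) :
    ((a : Set X) ∩ suppSet μ).Nonempty ↔ μ.1 a = true := by
  constructor
  · rintro ⟨x, hxa, hxs⟩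
    cases h : μ.1 a with
    | false => exact absurd hxa (mem_suppSet_iff.1 hxs a h)
    | true => rfl
  · intro h
    by_contra hne
    rw [Set.not_nonempty_iff_eq_empty] at hne
    -- a is covered by the null clopens
    have hcover : (a : Set X) ⊆ ⋃ b : {b : Clopens X // μ.1 b = false}, ((b : Clopens X) : Set X) := by
      intro x hx
      by_contra hxn
      have : x ∈ (a : Set X) ∩ suppSet μ := ⟨hx, hxn⟩
      rw [hne] at this
      exact this
    have hacomp : IsCompact (a : Set X) := a.2.isClosed.isCompact
    obtain ⟨t, ht⟩ := hacomp.elim_finite_subcover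
      (fun b : {b : Clopens X // μ.1 b = false} => ((b : Clopens X) : Set X))
      (fun b => b.1.2.isOpen) hcover
    set s : Clopens X := t.sup fun b => (b : Clopens X) with hs
    have hsnull : μ.1 s = false := by
      refine Finset.sup_induction (p := fun c => μ.1 c = false) μ.2.1
        (fun p hp q hq => measOf_sup_false μ hp hq) ?_
      exact fun b _ => b.2
    have hle : a ≤ s := by
      rw [← SetLike.coe_subset_coe]
      refine ht.trans ?_
      intro x hx
      simp only [Set.mem_iUnion] at hx
      obtain ⟨b, hb, hxb⟩ := hx
      exact SetLike.coe_subset_coe.2 (Finset.le_sup hb) hxb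
    have := measOf_monotone μ hle h
    rw [hsnull] at this
    exact absurd this (by simp)

lemma suppSet_measOf [T2Space X] (hX : IsTopologicalBasis {s : Set X | IsClopen s})
    (C : Closeds X) : suppSet (measOf C) = (C : Set X) := by
  ext x
  rw [mem_suppSet_iff]
  constructor
  · intro h
    by_contra hx
    obtain ⟨U, hU, hxU, hUC⟩ :=
      hX.exists_subset_of_mem_open (show x ∈ (C : Set X)ᶜ from hx) C.2.isOpen_compl
    have : (measOf C).1 ⟨U, hU⟩ = false := by
      simp only [measOf, decide_eq_false_iff_not]
      rintro ⟨y, hyU, hyC⟩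
      exact hUC hyU hyC
    exact h ⟨U, hU⟩ this hxU
  · intro hx a ha hxa
    have : ((a : Set X) ∩ (C : Set X)).Nonempty := ⟨x, hxa, hx⟩
    simp only [measOf, decide_eq_false_iff_not] at ha
    exact ha this

end Aux

/-- For a Boolean space `X` with dual algebra `B` of clopen sets, the Vietoris
hyperspace `V(X)` is homeomorphic to the space `M(X,2)` of finitely additive
`2`-valued measures on `B`, via `C ↦ μ_C` where `μ_C(a) = 1` iff `a` meets `C`. -/
theorem vietoris_homeomorphic_measures (X : Type*) [TopologicalSpace X]
    [CompactSpace X] [T2Space X] (hX : IsTopologicalBasis {s : Set X | IsClopen s}) :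
    letI : TopologicalSpace (Closeds X) := vietorisTopology X
    ∃ e : Closeds X ≃ₜ MeasSpace X,
      ∀ (C : Closeds X) (a : Clopens X),
        ((e C).1 a = true ↔ ((a : Set X) ∩ (C : Set X)).Nonempty) := by
  letI : TopologicalSpace (Closeds X) := vietorisTopology X
  have hfwd : ∀ (C : Closeds X) (a : Clopens X),
      ((measOf C).1 a = true ↔ ((a : Set X) ∩ (C : Set X)).Nonempty) := by
    intro C a
    simp [measOf]
  -- the equivalence
  refine ⟨⟨⟨measOf, fun μ => ⟨suppSet μ, suppSet_closed μ⟩, ?_, ?_⟩, ?_, ?_⟩, hfwd⟩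
  · -- left inverse
    intro C
    apply Closeds.ext
    exact suppSet_measOf hX C
  · -- right inverse
    intro μ
    apply Subtype.ext
    funext a
    rw [Bool.eq_iff_iff, hfwd]
    exact suppSet_spec μ a
  · -- continuity of measOf
    apply Continuous.subtype_mk
    apply continuous_pi
    intro a
    rw [continuous_discrete_rng]
    intro b
    cases b with
    | true =>
        have : (fun C : Closeds X => (measOf C).1 a) ⁻¹' {true} =
            {C : Closeds X | ((C : Set X) ∩ (a : Set X)).Nonempty} := by
          ext C
          simp only [Set.mem_preimage, Set.mem_singleton_iff, Set.mem_setOf_eq, hfwd,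
            Set.inter_comm]
        show IsOpen ((fun C : Closeds X => (measOf C).1 a) ⁻¹' {true})
        rw [this]
        exact TopologicalSpace.isOpen_generateFrom_of_mem
          (Or.inl ⟨(a : Set X), a.2, rfl⟩)
    | false =>
        have : (fun C : Closeds X => (measOf C).1 a) ⁻¹' {false} =
            {C : Closeds X | ((C : Set X) ∩ (a : Set X)).Nonempty}ᶜ := by
          ext C
          simp only [Set.mem_preimage, Set.mem_singleton_iff, Set.mem_compl_iff,
            Set.mem_setOf_eq, ← hfwd, Set.inter_comm]
          simp
        show IsOpen ((fun C : Closeds X => (measOf C).1 a) ⁻¹' {false})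
        rw [this]
        exact TopologicalSpace.isOpen_generateFrom_of_mem
          (Or.inr ⟨(a : Set X), a.2, rfl⟩)
  · -- continuity of the inverse
    refine continuous_generateFrom_iff.2 ?_
    rintro s (⟨U, hU, rfl⟩ | ⟨U, hU, rfl⟩)
    · have : (fun μ : MeasSpace X => (⟨suppSet μ, suppSet_closed μ⟩ : Closeds X)) ⁻¹'
          {C : Closeds X | ((C : Set X) ∩ U).Nonempty} =
          (fun μ : MeasSpace X => μ.1 ⟨U, hU⟩) ⁻¹' {true} := by
        ext μ
        simp only [Set.mem_preimage, Set.mem_setOf_eq, Set.mem_singleton_iff]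
        rw [← suppSet_spec μ ⟨U, hU⟩]
        exact ⟨fun ⟨x, h1, h2⟩ => ⟨x, h2, h1⟩, fun ⟨x, h1, h2⟩ => ⟨x, h2, h1⟩⟩
      rw [this]
      exact (isOpen_discrete _).preimage ((continuous_apply _).comp continuous_subtype_val)
    · have : (fun μ : MeasSpace X => (⟨suppSet μ, suppSet_closed μ⟩ : Closeds X)) ⁻¹'
          {C : Closeds X | ((C : Set X) ∩ U).Nonempty}ᶜ =
          (fun μ : MeasSpace X => μ.1 ⟨U, hU⟩) ⁻¹' {false} := by
        ext μ
        simp only [Set.mem_preimage, Set.mem_compl_iff, Set.mem_setOf_eq,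
          Set.mem_singleton_iff]
        rw [← Bool.not_eq_true, ← suppSet_spec μ ⟨U, hU⟩]
        exact not_congr ⟨fun ⟨x, h1, h2⟩ => ⟨x, h2, h1⟩, fun ⟨x, h1, h2⟩ => ⟨x, h2, h1⟩⟩
      rw [this]
      exact (isOpen_discrete _).preimage ((continuous_apply _).comp continuous_subtype_val)
end

section
/- Let L be a bounded distributive lattice and K ⊆ L a finite sublattice (containing 0 and 1). If for every b ∈ L the set {k ∈ K | k ≤ b} has a greatest element and every join-prime element of K is join-prime in L, then the map h : L → K sending b to the greatest element of K below b is a lattice homomorphism satisfying h(k) = k for all k ∈ K. -/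
/-- `p` is join-prime in a bounded lattice: `p ≠ ⊥` and `p ≤ a ⊔ b` implies
`p ≤ a` or `p ≤ b`. -/
def JoinPrimeElt {L : Type*} [Lattice L] [BoundedOrder L] (p : L) : Prop :=
  p ≠ ⊥ ∧ ∀ a b : L, p ≤ a ⊔ b → p ≤ a ∨ p ≤ b

/-- Let `K` be a finite sublattice (containing the bounds) of a bounded distributive
lattice `L` such that for every `b ∈ L` the set `{k ∈ K | k ≤ b}` has a greatest
element, and every join-prime of `K` is join-prime in `L`. Then the map sending `b`
to the greatest element of `K` below `b` is a lattice homomorphism fixing `K`. -/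
theorem finite_sublattice_retraction (L : Type*) [DistribLattice L] [BoundedOrder L]
    (K : Set L) (hfin : K.Finite) (hbot : ⊥ ∈ K) (htop : ⊤ ∈ K)
    (hsup : ∀ a ∈ K, ∀ b ∈ K, a ⊔ b ∈ K) (hinf : ∀ a ∈ K, ∀ b ∈ K, a ⊓ b ∈ K)
    (hmax : ∀ b : L, ∃ k ∈ K, k ≤ b ∧ ∀ k' ∈ K, k' ≤ b → k' ≤ k)
    (hjp : ∀ p ∈ K, (p ≠ ⊥ ∧ ∀ a ∈ K, ∀ b ∈ K, p ≤ a ⊔ b → p ≤ a ∨ p ≤ b) →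
      JoinPrimeElt p) :
    ∃ h : L → L, (∀ b : L, h b ∈ K ∧ h b ≤ b ∧ ∀ k ∈ K, k ≤ b → k ≤ h b) ∧
      (∀ a b : L, h (a ⊔ b) = h a ⊔ h b) ∧ (∀ a b : L, h (a ⊓ b) = h a ⊓ h b) ∧
      h ⊥ = ⊥ ∧ h ⊤ = ⊤ ∧ ∀ k ∈ K, h k = k := by
  choose h h1 h2 h3 using hmax
  -- key claim
  have key : ∀ a b : L, ∀ k ∈ K, k ≤ a ⊔ b → k ≤ h a ⊔ h b := by
    intro a b
    by_contra hcon
    push_neg at hcon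
    set S : Set L := {k | k ∈ K ∧ k ≤ a ⊔ b ∧ ¬ k ≤ h a ⊔ h b} with hS
    have hSfin : S.Finite := hfin.subset fun x hx => hx.1
    have hSne : S.Nonempty := by
      obtain ⟨k, hk1, hk2, hk3⟩ := hcon
      exact ⟨k, hk1, hk2, hk3⟩
    obtain ⟨k, hkS, hkmin⟩ : ∃ k ∈ S, ∀ k' ∈ S, id k' ≤ id k → id k = id k' := by
      obtain ⟨k, hk, hmin⟩ := hSfin.exists_minimalFor id S hSne
      exact ⟨k, hk, fun k' hk' hle => le_antisymm (hmin hk' hle) hle⟩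
    obtain ⟨hkK, hkab, hkle⟩ := hkS
    have hkne : k ≠ ⊥ := by
      rintro rfl; exact hkle bot_le
    by_cases hp : ∀ u ∈ K, ∀ v ∈ K, k ≤ u ⊔ v → k ≤ u ∨ k ≤ v
    · obtain ⟨_, hprime⟩ := hjp k hkK ⟨hkne, hp⟩
      rcases hprime a b hkab with hka | hkb
      · exact hkle (le_sup_of_le_left (h3 a k hkK hka))
      · exact hkle (le_sup_of_le_right (h3 b k hkK hkb))
    · push_neg at hp
      obtain ⟨u, huK, v, hvK, hkuv, hku, hkv⟩ := hp
      have hmem : ∀ w ∈ K, ¬ k ≤ w → k ⊓ w ≤ h a ⊔ h b := by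
        intro w hwK hkw
        by_contra hc
        have hin : k ⊓ w ∈ S :=
          ⟨hinf k hkK w hwK, le_trans inf_le_left hkab, hc⟩
        have heq : id k = id (k ⊓ w) := hkmin (k ⊓ w) hin inf_le_left
        simp only [id] at heq
        exact hkw (heq.le.trans inf_le_right)
      have h1' := hmem u huK hku
      have h2' := hmem v hvK hkv
      have : k = (k ⊓ u) ⊔ (k ⊓ v) := by
        rw [← inf_sup_left, inf_eq_left.mpr hkuv]
      exact hkle (this ▸ sup_le h1' h2')
  refine ⟨h, fun b => ⟨h1 b, h2 b, h3 b⟩, ?_, ?_, ?_, ?_, ?_⟩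
  · intro a b
    refine le_antisymm ?_ ?_
    · exact key a b (h (a ⊔ b)) (h1 _) (h2 _)
    · exact h3 (a ⊔ b) _ (hsup _ (h1 a) _ (h1 b)) (sup_le_sup (h2 a) (h2 b))
  · intro a b
    refine le_antisymm (le_inf ?_ ?_) ?_
    · exact h3 a _ (h1 _) ((h2 _).trans inf_le_left)
    · exact h3 b _ (h1 _) ((h2 _).trans inf_le_right)
    · exact h3 (a ⊓ b) _ (hinf _ (h1 a) _ (h1 b)) (inf_le_inf (h2 a) (h2 b))
  · exact le_bot_iff.mp (h2 ⊥)
  · exact le_antisymm le_top (h3 ⊤ ⊤ htop le_rfl)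
  · intro k hk; exact le_antisymm (h2 k) (h3 k k hk le_rfl)
end

section
/- If B is a Boolean algebra with Stone dual space X, then the dual space of the free Boolean algebra generated by the set {◇a | a ∈ B} modulo the relations ◇0 = 0 and ◇(a ∨ b) = ◇a ∨ ◇b is homeomorphic to the Vietoris hyperspace V(X); equivalently, Boolean algebra homomorphisms from this quotient to 2 correspond bijectively to closed subsets of X, via h ↦ {x ∈ X | ∀ a ∈ B, x ∈ â implies h(◇a) = 1}. -/
/-- The Stone dual space of `B`: ultrafilters with the Stone topology. -/
def StoneSpace (B : Type*) [BooleanAlgebra B] : Type _ := {F : Set B // IsUltrafilterSet F}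

instance (B : Type*) [BooleanAlgebra B] : TopologicalSpace (StoneSpace B) :=
  TopologicalSpace.generateFrom {s : Set (StoneSpace B) | ∃ a : B, s = {U | a ∈ U.1}}

namespace MAVietoris

variable {B : Type*} [BooleanAlgebra B]

lemma mem_sup_iff (x : StoneSpace B) (a b : B) : a ⊔ b ∈ x.1 ↔ a ∈ x.1 ∨ b ∈ x.1 := by
  obtain ⟨htop, hbot, hup, hinf, hcompl⟩ := x.2
  constructor
  · intro h
    rcases hcompl a with ha | ha
    · exact Or.inl ha
    · right
      have := hinf _ _ ha h
      exact hup _ _ this (by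
        rw [inf_sup_left]
        simp)
  · rintro (h | h)
    · exact hup _ _ h le_sup_left
    · exact hup _ _ h le_sup_right

lemma basis : TopologicalSpace.IsTopologicalBasis
    {s : Set (StoneSpace B) | ∃ a : B, s = {U | a ∈ U.1}} := by
  refine ⟨?_, ?_, rfl⟩
  · rintro t₁ ⟨a, rfl⟩ t₂ ⟨b, rfl⟩ x ⟨hxa, hxb⟩
    refine ⟨{U | a ⊓ b ∈ U.1}, ⟨a ⊓ b, rfl⟩, x.2.2.2.2.1 _ _ hxa hxb, ?_⟩
    rintro y hy
    exact ⟨y.2.2.2.1 _ _ hy inf_le_left, y.2.2.2.1 _ _ hy inf_le_right⟩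
  · apply Set.eq_univ_of_univ_subset
    rintro x -
    exact Set.mem_sUnion.2 ⟨{U | (⊤ : B) ∈ U.1}, ⟨⊤, rfl⟩, x.2.1⟩

lemma isOpen_basic (a : B) : IsOpen {U : StoneSpace B | a ∈ U.1} :=
  TopologicalSpace.isOpen_generateFrom_of_mem ⟨a, rfl⟩

variable {d : B → Bool} (hd0 : d ⊥ = false) (hdsup : ∀ a b : B, d (a ⊔ b) = (d a || d b))

include hdsup in
lemma d_mono {a b : B} (hab : a ≤ b) (ha : d a = true) : d b = true := by
  have : d b = (d a || d b) := by rw [← hdsup, sup_eq_right.2 hab]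
  rw [this, ha, Bool.true_or]

include hd0 hdsup in
/-- Key point: if `d a = true` there is an ultrafilter containing `a` on which `d` is
identically true. -/
lemma exists_ultrafilter (a : B) (ha : d a = true) :
    ∃ x : StoneSpace B, a ∈ x.1 ∧ ∀ b ∈ x.1, d b = true := by
  -- the ideal of elements with `d = false`
  have hIdl : Order.IsIdeal {b : B | d b = false} := by
    refine ⟨?_, ⟨⊥, hd0⟩, ?_⟩
    · intro b c hcb hb
      simp only [Set.mem_setOf_eq] at *
      by_contra hcne
      have : d b = true := d_mono hdsup hcb (eq_true_of_ne_false hcne)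
      rw [hb] at this
      exact absurd this (by simp)
    · intro b hb c hc
      refine ⟨b ⊔ c, ?_, le_sup_left, le_sup_right⟩
      simp only [Set.mem_setOf_eq] at *
      rw [hdsup, hb, hc]; rfl
  set I := hIdl.toIdeal
  set F := Order.PFilter.principal a
  have hdisj : Disjoint (F : Set B) (I : Set B) := by
    rw [Set.disjoint_left]
    intro b hbF hbI
    have hab : a ≤ b := Order.Ideal.mem_principal.1 hbF
    have : d b = true := d_mono hdsup hab ha
    rw [hbI] at this
    exact Bool.false_ne_true this
  obtain ⟨J, hJprime, hIJ, hFJ⟩ := DistribLattice.prime_ideal_of_disjoint_filter_ideal hdisj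
  have htopJ : (⊤ : B) ∉ (J : Set B) :=
    Set.disjoint_left.1 hFJ (Order.Ideal.mem_principal.2 le_top)
  have hult : IsUltrafilterSet ((J : Set B)ᶜ) := by
    refine ⟨htopJ, ?_, ?_, ?_, ?_⟩
    · simp only [Set.mem_compl_iff, not_not]
      exact J.bot_mem
    · intro b c hb hbc hcJ
      exact hb (J.lower hbc hcJ)
    · intro b c hb hc h
      rcases hJprime.mem_or_mem h with h' | h'
      · exact hb h'
      · exact hc h'
    · intro b
      by_contra h
      push_neg at h
      obtain ⟨hb, hbc⟩ := h
      simp only [Set.mem_compl_iff, not_not] at hb hbc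
      exact htopJ (by simpa using J.sup_mem hb hbc)
  refine ⟨⟨(J : Set B)ᶜ, hult⟩, ?_, ?_⟩
  · exact Set.disjoint_left.1 hFJ (Order.Ideal.mem_principal.2 le_rfl)
  · intro b hb
    by_contra hbd
    exact hb (hIJ (by exact Bool.eq_false_iff.2 hbd))

end MAVietoris

open MAVietoris in
/-- By freeness, a Boolean algebra homomorphism from the quotient
`MA(B) = F_BA({◇a | a ∈ B}) / (◇0 ≈ 0, ◇(a∨b) ≈ ◇a ∨ ◇b)` to `2` is the same
thing as an assignment `d : B → 2` of the generators with `d(0) = 0` and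
`d(a ∨ b) = d(a) ∨ d(b)`. The theorem: such homomorphisms correspond bijectively
to closed subsets of the Stone space `X` of `B`, via
`h ↦ {x ∈ X | ∀ a, x ∈ â → h(◇a) = 1}`; i.e. the dual space of `MA(B)` is the
Vietoris hyperspace `V(X)`. -/
theorem dual_of_MA_is_vietoris (B : Type*) [BooleanAlgebra B] :
    (∀ d : {d : B → Bool // d ⊥ = false ∧ ∀ a b : B, d (a ⊔ b) = (d a || d b)},
      IsClosed {x : StoneSpace B | ∀ a : B, a ∈ x.1 → d.1 a = true}) ∧
    Function.Injective
      (fun d : {d : B → Bool // d ⊥ = false ∧ ∀ a b : B, d (a ⊔ b) = (d a || d b)} =>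
        {x : StoneSpace B | ∀ a : B, a ∈ x.1 → d.1 a = true}) ∧
    (∀ C : Set (StoneSpace B), IsClosed C →
      ∃ d : {d : B → Bool // d ⊥ = false ∧ ∀ a b : B, d (a ⊔ b) = (d a || d b)},
        {x : StoneSpace B | ∀ a : B, a ∈ x.1 → d.1 a = true} = C) := by
  have hmem : ∀ (d : {d : B → Bool // d ⊥ = false ∧ ∀ a b : B, d (a ⊔ b) = (d a || d b)}) (a : B),
      d.1 a = true ↔ ∃ x : StoneSpace B,
        x ∈ {x : StoneSpace B | ∀ a : B, a ∈ x.1 → d.1 a = true} ∧ a ∈ x.1 := by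
    intro d a
    constructor
    · intro ha
      obtain ⟨x, hax, hx⟩ := exists_ultrafilter d.2.1 d.2.2 a ha
      exact ⟨x, hx, hax⟩
    · rintro ⟨x, hx, hax⟩
      exact hx a hax
  refine ⟨?_, ?_, ?_⟩
  · intro d
    have : {x : StoneSpace B | ∀ a : B, a ∈ x.1 → d.1 a = true}
        = (⋃ a ∈ {a : B | d.1 a = false}, {x : StoneSpace B | a ∈ x.1})ᶜ := by
      ext x
      simp only [Set.mem_compl_iff, Set.mem_iUnion, Set.mem_setOf_eq, exists_prop, not_exists]
      constructor
      · rintro h a ⟨hda, hax⟩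
        rw [h a hax] at hda
        simp at hda
      · intro h a hax
        by_contra hda
        exact h a ⟨Bool.eq_false_iff.2 hda, hax⟩
    rw [this]
    exact (isOpen_biUnion fun a _ => isOpen_basic a).isClosed_compl
  · intro d₁ d₂ h
    ext1
    funext a
    have h1 := hmem d₁ a
    have h2 := hmem d₂ a
    simp only at h
    rw [h] at h1
    exact Bool.eq_iff_iff.2 (h1.trans h2.symm)
  · intro C hC
    classical
    refine ⟨⟨fun a => decide (∃ x ∈ C, a ∈ x.1), ?_, ?_⟩, ?_⟩
    · simp only [decide_eq_false_iff_not, not_exists]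
      rintro x ⟨hx, hbot⟩
      exact x.2.2.1 hbot
    · intro a b
      apply Bool.eq_iff_iff.2
      simp only [decide_eq_true_iff, Bool.or_eq_true]
      constructor
      · rintro ⟨x, hx, hab⟩
        rcases (mem_sup_iff x a b).1 hab with h | h
        · exact Or.inl ⟨x, hx, h⟩
        · exact Or.inr ⟨x, hx, h⟩
      · rintro (⟨x, hx, h⟩ | ⟨x, hx, h⟩)
        · exact ⟨x, hx, (mem_sup_iff x a b).2 (Or.inl h)⟩
        · exact ⟨x, hx, (mem_sup_iff x a b).2 (Or.inr h)⟩
    · ext x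
      simp only [Set.mem_setOf_eq, decide_eq_true_iff]
      constructor
      · intro h
        by_contra hxC
        obtain ⟨t, ⟨a, rfl⟩, hxt, htC⟩ := basis.exists_subset_of_mem_open hxC hC.isOpen_compl
        obtain ⟨y, hyC, hay⟩ := h a hxt
        exact htC hay hyC
      · intro hx a hax
        exact ⟨x, hx, hax⟩
end

section
/- In the profinite interval Γ (the limit of the system of chains Γ_n with flooring maps), the continuous surjection γ : Γ → [0,1] given by evaluating the limit of the approximating sequence, together with the section ι : [0,1] → Γ sending rational q to its stabilizing approximation q⌝ and irrational r to its strict lower approximation r⌞, satisfies γ ∘ ι = id on [0,1]. -/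
/-- The chain `Γ_n = {0, 1/n, 2/n, …, 1}`. -/
def GammaChain (n : ℕ+) : Set ℚ := {q : ℚ | ∃ a : ℕ, a ≤ (n : ℕ) ∧ q = (a : ℚ) / (n : ℕ)}

/-- The profinite interval `Γ`: the inverse limit of the chains `Γ_n` under the
flooring maps, i.e. sequences `(x_n)` with `x_n ∈ Γ_n` such that for `n ∣ m`,
`x_n` is the largest element of `Γ_n` below `x_m`. -/
def GammaLim : Type :=
  {x : ℕ+ → ℚ // (∀ n, x n ∈ GammaChain n) ∧
    ∀ m n : ℕ+, (n : ℕ) ∣ (m : ℕ) →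
      x n ≤ x m ∧ ∀ q ∈ GammaChain n, q ≤ x m → q ≤ x n}

/-- The map `γ : Γ → [0,1]`, sending a compatible sequence to its supremum in `ℝ`. -/
noncomputable def gammaEval (x : GammaLim) : ℝ :=
  sSup (Set.range fun n : ℕ+ => ((x.1 n : ℚ) : ℝ))

/-- The section `ι : [0,1] → Γ` of `γ` sends `r` to the compatible sequence whose
`n`-th entry is the largest element of `Γ_n` that approximates `r` from below
(the stabilizing approximation `q⌝` for rational `q`, the strict lower
approximation `r⌞` for irrational `r`, and the zero sequence for `0`); it
satisfies `γ ∘ ι = id` on `[0,1]`. -/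
theorem gamma_retraction_section (r : ℝ) (h0 : 0 ≤ r) (h1 : r ≤ 1) :
    ∃ x : GammaLim,
      (∀ n : ℕ+, ((x.1 n : ℚ) : ℝ) ≤ r ∧
        ∀ q ∈ GammaChain n, (q : ℝ) ≤ r → q ≤ x.1 n) ∧
      gammaEval x = r := by
  set f : ℕ+ → ℚ := fun n => (⌊((n : ℕ) : ℝ) * r⌋ : ℚ) / ((n : ℕ) : ℚ) with hf
  have hnpos : ∀ n : ℕ+, (0 : ℝ) < ((n : ℕ) : ℝ) := fun n => by
    exact_mod_cast n.pos
  have hnposQ : ∀ n : ℕ+, (0 : ℚ) < ((n : ℕ) : ℚ) := fun n => by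
    exact_mod_cast n.pos
  have hfl0 : ∀ n : ℕ+, (0 : ℤ) ≤ ⌊((n : ℕ) : ℝ) * r⌋ := fun n =>
    Int.le_floor.2 (by push_cast; positivity)
  have hfln : ∀ n : ℕ+, ⌊((n : ℕ) : ℝ) * r⌋ ≤ (n : ℕ) := by
    intro n
    have hn := hnpos n
    refine Int.lt_add_one_iff.mp (Int.floor_lt.2 ?_)
    push_cast
    nlinarith
  have hmem : ∀ n : ℕ+, f n ∈ GammaChain n := by
    intro n
    refine ⟨(⌊((n : ℕ) : ℝ) * r⌋).toNat, ?_, ?_⟩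
    · exact_mod_cast (Int.toNat_le.2 (by exact_mod_cast hfln n))
    · have hcast : (((⌊((n : ℕ) : ℝ) * r⌋).toNat : ℕ) : ℚ) = ((⌊((n : ℕ) : ℝ) * r⌋ : ℤ) : ℚ) := by
        exact_mod_cast congrArg (fun z : ℤ => (z : ℚ)) (Int.toNat_of_nonneg (hfl0 n))
      show (⌊((n : ℕ) : ℝ) * r⌋ : ℚ) / ((n : ℕ) : ℚ) = _
      rw [hcast]
  have hle : ∀ n : ℕ+, ((f n : ℚ) : ℝ) ≤ r := by
    intro n
    have h1 : ((⌊((n : ℕ) : ℝ) * r⌋ : ℤ) : ℝ) ≤ ((n : ℕ) : ℝ) * r := Int.floor_le _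
    have := hnpos n
    rw [hf]; push_cast
    rw [div_le_iff₀ this]; linarith
  have hmax : ∀ n : ℕ+, ∀ q ∈ GammaChain n, (q : ℝ) ≤ r → q ≤ f n := by
    intro n q hq hqr
    obtain ⟨a, _, rfl⟩ := hq
    have hn := hnpos n
    have hnr : ((a : ℕ) : ℝ) ≤ ((n : ℕ) : ℝ) * r := by
      have : (((a : ℚ) / ((n : ℕ) : ℚ) : ℚ) : ℝ) = (a : ℝ) / ((n : ℕ) : ℝ) := by push_cast; ring
      rw [this, div_le_iff₀ hn] at hqr
      linarith
    have hZ : (a : ℤ) ≤ ⌊((n : ℕ) : ℝ) * r⌋ := Int.le_floor.2 (by exact_mod_cast hnr)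
    show ((a : ℕ) : ℚ) / ((n : ℕ) : ℚ) ≤ (⌊((n : ℕ) : ℝ) * r⌋ : ℚ) / ((n : ℕ) : ℚ)
    gcongr
    exact_mod_cast hZ
  have hlow : ∀ n : ℕ+, r - 1 / ((n : ℕ) : ℝ) < ((f n : ℚ) : ℝ) := by
    intro n
    have h1 : ((n : ℕ) : ℝ) * r - 1 < ((⌊((n : ℕ) : ℝ) * r⌋ : ℤ) : ℝ) := by
      have := Int.sub_one_lt_floor (((n : ℕ) : ℝ) * r); linarith
    have hn := hnpos n
    have key : (r - 1 / ((n : ℕ) : ℝ)) * ((n : ℕ) : ℝ) = ((n : ℕ) : ℝ) * r - 1 := by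
      field_simp
    rw [hf]; push_cast
    rw [lt_div_iff₀ hn, key]
    exact h1
  refine ⟨⟨f, hmem, ?_⟩, fun n => ⟨hle n, hmax n⟩, ?_⟩
  · intro m n hdvd
    constructor
    · obtain ⟨a, ha, hfa⟩ := hmem n
      obtain ⟨k, hk⟩ := hdvd
      have hk0 : 0 < k := Nat.pos_of_ne_zero (by
        rintro rfl
        rw [Nat.mul_zero] at hk
        exact m.pos.ne' hk)
      have hmemm : f n ∈ GammaChain m := by
        refine ⟨a * k, ?_, ?_⟩
        · rw [hk]; exact Nat.mul_le_mul_right k ha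
        · rw [hfa, hk]; push_cast
          rw [div_eq_div_iff (hnposQ n).ne' (by positivity)]
          push_cast; ring
      exact hmax m _ hmemm (hle n)
    · intro q hq hqm
      exact hmax n q hq ((by exact_mod_cast hqm : ((q : ℚ) : ℝ) ≤ ((f m : ℚ) : ℝ)).trans (hle m))
  · unfold gammaEval
    have hne : (Set.range fun n : ℕ+ => ((f n : ℚ) : ℝ)).Nonempty := ⟨_, ⟨1, rfl⟩⟩
    have hbdd : BddAbove (Set.range fun n : ℕ+ => ((f n : ℚ) : ℝ)) := by
      refine ⟨r, ?_⟩
      rintro y ⟨n, rfl⟩; exact hle n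
    apply le_antisymm
    · exact csSup_le hne (by rintro y ⟨n, rfl⟩; exact hle n)
    · by_contra hlt
      push_neg at hlt
      set S := sSup (Set.range fun n : ℕ+ => ((f n : ℚ) : ℝ)) with hS
      have hrs : 0 < r - S := sub_pos.2 hlt
      obtain ⟨n, hn⟩ := exists_nat_gt (1 / (r - S))
      have hn0 : 0 < n := by
        by_contra h
        push_neg at h
        interval_cases n
        have hp : (0:ℝ) < 1 / (r - S) := by positivity
        simp at hn
        linarith
      have hnR : (0:ℝ) < (n:ℝ) := by exact_mod_cast hn0
      set N : ℕ+ := ⟨n, hn0⟩ with hN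
      have h1 : 1 / ((N : ℕ) : ℝ) < r - S := by
        have he : ((N : ℕ) : ℝ) = (n : ℝ) := rfl
        rw [he, div_lt_iff₀ hnR]
        rw [div_lt_iff₀ hrs] at hn
        nlinarith
      have h2 := hlow N
      have h3 : ((f N : ℚ) : ℝ) ≤ S := le_csSup hbdd ⟨N, rfl⟩
      linarith
end
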